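/- Let α : I → S²(p, r) be a closed C³ unit-speed curve on a sphere in ℝ³ with nonvanishing curvature. Then the total torsion of α vanishes: ∮ τ(s) ds = 0. -/

import Mathlib

/-- Euclidean dot product on `ℝ³`. -/
noncomputable def edot (x y : Fin 3 → ℝ) : ℝ := ∑ i, x i * y i

/-- Euclidean norm on `ℝ³`. -/
noncomputable def enorm3 (x : Fin 3 → ℝ) : ℝ := Real.sqrt (edot x x)

/-- Euclidean cross product on `ℝ³`. -/
noncomputable def cross (u v : Fin 3 → ℝ) : Fin 3 → ℝ :=
  ![u 1 * v 2 - u 2 * v 1, u 2 * v 0 - u 0 * v 2, u 0 * v 1 - u 1 * v 0]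

/-- The torsion `τ = ⟨α' × α'', α'''⟩ / ‖α' × α''‖²`. -/
noncomputable def torsion (α : ℝ → Fin 3 → ℝ) (s : ℝ) : ℝ :=
  edot (cross (deriv α s) (deriv (deriv α) s)) (deriv (deriv (deriv α)) s) /
    (enorm3 (cross (deriv α s) (deriv (deriv α) s))) ^ 2

lemma cross_apply0 (u v : Fin 3 → ℝ) : cross u v 0 = u 1 * v 2 - u 2 * v 1 := rfl
lemma cross_apply1 (u v : Fin 3 → ℝ) : cross u v 1 = u 2 * v 0 - u 0 * v 2 := rfl
lemma cross_apply2 (u v : Fin 3 → ℝ) : cross u v 2 = u 0 * v 1 - u 1 * v 0 := rfl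

lemma key_identity (a T A C : Fin 3 → ℝ)
    (hTT : edot T T = 1) (haT : edot a T = 0) (hTA : edot T A = 0)
    (haA : edot a A = -1) (haC : edot a C = 0) :
    edot a (cross T C) * edot A A = edot (cross T A) C * (1 + edot a (cross T A) ^ 2) := by
  simp only [edot, Fin.sum_univ_three, cross_apply0, cross_apply1, cross_apply2] at *
  linear_combination (((T 1 * C 2 - T 2 * C 1) + (a 0 * (T 1 * A 2 - T 2 * A 1) + a 1 * (T 2 * A 0 - T 0 * A 2) + a 2 * (T 0 * A 1 - T 1 * A 0)) * C 0) * (-(A 0) - (A 0 * A 0 + A 1 * A 1 + A 2 * A 2) * a 0 + ((a 0 * A 0 + a 1 * A 1 + a 2 * A 2) + 1) * A 0) + ((T 2 * C 0 - T 0 * C 2) + (a 0 * (T 1 * A 2 - T 2 * A 1) + a 1 * (T 2 * A 0 - T 0 * A 2) + a 2 * (T 0 * A 1 - T 1 * A 0)) * C 1) * (-(A 1) - (A 0 * A 0 + A 1 * A 1 + A 2 * A 2) * a 1 + ((a 0 * A 0 + a 1 * A 1 + a 2 * A 2) + 1) * A 1) + ((T 0 * C 1 - T 1 * C 0) + (a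 0 * (T 1 * A 2 - T 2 * A 1) + a 1 * (T 2 * A 0 - T 0 * A 2) + a 2 * (T 0 * A 1 - T 1 * A 0)) * C 2) * (-(A 2) - (A 0 * A 0 + A 1 * A 1 + A 2 * A 2) * a 2 + ((a 0 * A 0 + a 1 * A 1 + a 2 * A 2) + 1) * A 2) + (a 0 * (T 1 * A 2 - T 2 * A 1) + a 1 * (T 2 * A 0 - T 0 * A 2) + a 2 * (T 0 * A 1 - T 1 * A 0)) * (A 0 * C 0 + A 1 * C 1 + A 2 * C 2)) * hTT + (((T 1 * C 2 - T 2 * C 1) + (a 0 * (T 1 * A 2 - T 2 * A 1) + a 1 * (T 2 * A 0 - T 0 * A 2) + a 2 * (T 0 * A 1 - T 1 * A 0)) * C 0) * ((A 0 * A 0 + A 1 * A 1 + A 2 * A 2) * T 0 - (T 0 * A 0 + T 1 * A 1 + T 2 * A 2) * A 0) + ((T 2 * C 0 - T 0 * C 2) + (a 0 * (T 1 * A 2 - T 2 * A 1) + a 1 * (T 2 * A 0 - T 0 * A 2) + a 2 * (T 0 * A 1 - T 1 * A 0)) * C 1) * ((A 0 * A 0 + A 1 * A 1 + A 2 * A 2)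 * T 1 - (T 0 * A 0 + T 1 * A 1 + T 2 * A 2) * A 1) + ((T 0 * C 1 - T 1 * C 0) + (a 0 * (T 1 * A 2 - T 2 * A 1) + a 1 * (T 2 * A 0 - T 0 * A 2) + a 2 * (T 0 * A 1 - T 1 * A 0)) * C 2) * ((A 0 * A 0 + A 1 * A 1 + A 2 * A 2) * T 2 - (T 0 * A 0 + T 1 * A 1 + T 2 * A 2) * A 2)) * haT + (((T 1 * C 2 - T 2 * C 1) + (a 0 * (T 1 * A 2 - T 2 * A 1) + a 1 * (T 2 * A 0 - T 0 * A 2) + a 2 * (T 0 * A 1 - T 1 * A 0)) * C 0) * (T 0 + (T 0 * A 0 + T 1 * A 1 + T 2 * A 2) * a 0 - ((a 0 * A 0 + a 1 * A 1 + a 2 * A 2) + 1) * T 0) + ((T 2 * C 0 - T 0 * C 2) + (a 0 * (T 1 * A 2 - T 2 * A 1) + a 1 * (T 2 * A 0 - T 0 * A 2) + a 2 * (T 0 * A 1 - T 1 * A 0)) * C 1) * (T 1 + (T 0 * A 0 + T 1 * A 1 + T 2 * A 2) * a 1 - ((a 0 * A 0 + a 1 * A 1 + a 2 * A 2) + 1)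 * T 1) + ((T 0 * C 1 - T 1 * C 0) + (a 0 * (T 1 * A 2 - T 2 * A 1) + a 1 * (T 2 * A 0 - T 0 * A 2) + a 2 * (T 0 * A 1 - T 1 * A 0)) * C 2) * (T 2 + (T 0 * A 0 + T 1 * A 1 + T 2 * A 2) * a 2 - ((a 0 * A 0 + a 1 * A 1 + a 2 * A 2) + 1) * T 2) - (a 0 * (T 1 * A 2 - T 2 * A 1) + a 1 * (T 2 * A 0 - T 0 * A 2) + a 2 * (T 0 * A 1 - T 1 * A 0)) * (T 0 * C 0 + T 1 * C 1 + T 2 * C 2)) * hTA + (((T 1 * C 2 - T 2 * C 1) + (a 0 * (T 1 * A 2 - T 2 * A 1) + a 1 * (T 2 * A 0 - T 0 * A 2) + a 2 * (T 0 * A 1 - T 1 * A 0)) * C 0) * (A 0) + ((T 2 * C 0 - T 0 * C 2) + (a 0 * (T 1 * A 2 - T 2 * A 1) + a 1 * (T 2 * A 0 - T 0 * A 2) + a 2 * (T 0 * A 1 - T 1 * A 0)) * C 1) * (A 1) + ((T 0 * C 1 - T 1 * C 0) + (a 0 * (T 1 * A 2 - T 2 * A 1) + a 1 * (T 2 * A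 0 - T 0 * A 2) + a 2 * (T 0 * A 1 - T 1 * A 0)) * C 2) * (A 2)) * haA + (-((a 0 * (T 1 * A 2 - T 2 * A 1) + a 1 * (T 2 * A 0 - T 0 * A 2) + a 2 * (T 0 * A 1 - T 1 * A 0)) * (A 0 * A 0 + A 1 * A 1 + A 2 * A 2))) * haC

lemma ww_identity (T A : Fin 3 → ℝ) (hTT : edot T T = 1) (hTA : edot T A = 0) :
    edot (cross T A) (cross T A) = edot A A := by
  simp only [edot, Fin.sum_univ_three, cross_apply0, cross_apply1, cross_apply2] at *
  linear_combination ((A 0 * A 0 + A 1 * A 1 + A 2 * A 2)) * hTT + (-(T 0 * A 0 + T 1 * A 1 + T 2 * A 2)) * hTA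

lemma edot_comm (x y : Fin 3 → ℝ) : edot x y = edot y x := by
  simp only [edot, Fin.sum_univ_three]; ring

lemma edot_self_nonneg (x : Fin 3 → ℝ) : 0 ≤ edot x x :=
  Finset.sum_nonneg fun i _ => mul_self_nonneg _

lemma enorm_sq (x : Fin 3 → ℝ) : enorm3 x ^ 2 = edot x x := by
  rw [enorm3, Real.sq_sqrt (edot_self_nonneg x)]

lemma edot_self_pos (x : Fin 3 → ℝ) (hx : x ≠ 0) : 0 < edot x x := by
  obtain ⟨i, hi⟩ := Function.ne_iff.mp hx
  exact Finset.sum_pos' (fun j _ => mul_self_nonneg _)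
    ⟨i, Finset.mem_univ i, mul_self_pos.mpr hi⟩

lemma hasDerivAt_edot {f g : ℝ → Fin 3 → ℝ} {f' g' : Fin 3 → ℝ} {s : ℝ}
    (hf : HasDerivAt f f' s) (hg : HasDerivAt g g' s) :
    HasDerivAt (fun t => edot (f t) (g t)) (edot f' (g s) + edot (f s) g') s := by
  have hfc := hasDerivAt_pi.mp hf
  have hgc := hasDerivAt_pi.mp hg
  have H := (((hfc 0).mul (hgc 0)).add ((hfc 1).mul (hgc 1))).add ((hfc 2).mul (hgc 2))
  have heq : (fun t => edot (f t) (g t)) = fun t => f t 0 * g t 0 + f t 1 * g t 1 + f t 2 * g t 2 := by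
    funext t; simp only [edot, Fin.sum_univ_three]
  rw [heq]
  refine H.congr_deriv ?_
  simp only [edot, Fin.sum_univ_three]; ring

lemma hasDerivAt_edot_cross {f g h : ℝ → Fin 3 → ℝ} {f' g' h' : Fin 3 → ℝ} {s : ℝ}
    (hf : HasDerivAt f f' s) (hg : HasDerivAt g g' s) (hh : HasDerivAt h h' s) :
    HasDerivAt (fun t => edot (f t) (cross (g t) (h t)))
      (edot f' (cross (g s) (h s)) + edot (f s) (cross g' (h s)) +
        edot (f s) (cross (g s) h')) s := by
  have hfc := hasDerivAt_pi.mp hf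
  have hgc := hasDerivAt_pi.mp hg
  have hhc := hasDerivAt_pi.mp hh
  have H := (((hfc 0).mul (((hgc 1).mul (hhc 2)).sub ((hgc 2).mul (hhc 1)))).add
      ((hfc 1).mul (((hgc 2).mul (hhc 0)).sub ((hgc 0).mul (hhc 2))))).add
      ((hfc 2).mul (((hgc 0).mul (hhc 1)).sub ((hgc 1).mul (hhc 0))))
  have heq : (fun t => edot (f t) (cross (g t) (h t))) =
      fun t => f t 0 * (g t 1 * h t 2 - g t 2 * h t 1) +
        f t 1 * (g t 2 * h t 0 - g t 0 * h t 2) +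
        f t 2 * (g t 0 * h t 1 - g t 1 * h t 0) := by
    funext t
    simp only [edot, Fin.sum_univ_three, cross_apply0, cross_apply1, cross_apply2]
  rw [heq]
  refine H.congr_deriv ?_
  simp only [edot, Fin.sum_univ_three, cross_apply0, cross_apply1, cross_apply2, Pi.mul_apply, Pi.sub_apply]; ring

lemma deriv_val_of_const {F : ℝ → ℝ} {c d s : ℝ} (h : HasDerivAt F d s)
    (hc : ∀ t, F t = c) : d = 0 := by
  have h0 : HasDerivAt F 0 s := by
    have hF : F = fun _ => c := funext hc
    rw [hF]; exact hasDerivAt_const s c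
  exact h.unique h0

/-- The total torsion of a closed `C³` unit-speed spherical curve with
nonvanishing curvature vanishes: `∮ τ ds = 0`. -/
theorem stmt5 (α : ℝ → Fin 3 → ℝ) (p : Fin 3 → ℝ) (r L : ℝ) (hr : 0 < r) (hL : 0 < L)
    (hα : ContDiff ℝ 3 α)
    (hunit : ∀ s, edot (deriv α s) (deriv α s) = 1)
    (hsph : ∀ s, edot (α s - p) (α s - p) = r ^ 2)
    (hκ : ∀ s, deriv (deriv α) s ≠ 0)
    (hc0 : α 0 = α L)
    (hc1 : deriv α 0 = deriv α L)
    (hc2 : deriv (deriv α) 0 = deriv (deriv α) L)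
    (hc3 : deriv (deriv (deriv α)) 0 = deriv (deriv (deriv α)) L) :
    ∫ s in (0 : ℝ)..L, torsion α s = 0 := by
  have hα' : ContDiff ℝ (2 + 1) α := by norm_num; exact hα
  obtain ⟨hdα, -, hT2⟩ := contDiff_succ_iff_deriv.mp hα'
  have hT2' : ContDiff ℝ (1 + 1) (deriv α) := by norm_num; exact hT2
  obtain ⟨hdT, -, hA1⟩ := contDiff_succ_iff_deriv.mp hT2'
  obtain ⟨hdA, hCc⟩ := contDiff_one_iff_deriv.mp hA1
  set T := deriv α with hTdef
  set A := deriv T with hAdef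
  set C := deriv A with hCdef
  have Ha : ∀ s, HasDerivAt (fun t => α t - p) (T s) s :=
    fun s => ((hdα s).hasDerivAt).sub_const p
  have HT : ∀ s, HasDerivAt T (A s) s := fun s => (hdT s).hasDerivAt
  have HA : ∀ s, HasDerivAt A (C s) s := fun s => (hdA s).hasDerivAt
  have haT : ∀ s, edot (α s - p) (T s) = 0 := by
    intro s
    have h := hasDerivAt_edot (Ha s) (Ha s)
    have h0 := deriv_val_of_const h hsph
    have hc := edot_comm (T s) (α s - p)
    linarith
  have hTA : ∀ s, edot (T s) (A s) = 0 := by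
    intro s
    have h := hasDerivAt_edot (HT s) (HT s)
    have h0 := deriv_val_of_const h hunit
    have hc := edot_comm (A s) (T s)
    linarith
  have haA : ∀ s, edot (α s - p) (A s) = -1 := by
    intro s
    have h := hasDerivAt_edot (Ha s) (HT s)
    have h0 := deriv_val_of_const h haT
    have hc := edot_comm (T s) (α s - p)
    have hu := hunit s
    linarith
  have haC : ∀ s, edot (α s - p) (C s) = 0 := by
    intro s
    have h := hasDerivAt_edot (Ha s) (HA s)
    have h0 := deriv_val_of_const h haA
    have hc := edot_comm (T s) (α s - p)
    linarith [hTA s, haT s]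
  -- the auxiliary function g and its derivative
  set g : ℝ → ℝ := fun t => edot (α t - p) (cross (T t) (A t)) with hgdef
  have Hg : ∀ s, HasDerivAt g (edot (α s - p) (cross (T s) (C s))) s := by
    intro s
    have h := hasDerivAt_edot_cross (Ha s) (HT s) (HA s)
    have h1 : edot (T s) (cross (T s) (A s)) = 0 := by
      simp only [edot, Fin.sum_univ_three, cross_apply0, cross_apply1, cross_apply2]; ring
    have h2 : edot (α s - p) (cross (A s) (A s)) = 0 := by
      simp only [edot, Fin.sum_univ_three, cross_apply0, cross_apply1, cross_apply2]; ring
    convert h using 1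
    rw [h1, h2]; ring
  have hpos : ∀ s, 0 < edot (A s) (A s) := fun s => edot_self_pos _ (hκ s)
  -- torsion is the derivative of arctan ∘ g
  have htorsf : torsion α = fun t => edot (cross (T t) (A t)) (C t) / edot (A t) (A t) := by
    funext t
    simp only [torsion]
    rw [enorm_sq, ww_identity _ _ (hunit t) (hTA t)]
  have htors : ∀ t, torsion α t = 1 / (1 + g t ^ 2) * edot (α t - p) (cross (T t) (C t)) := by
    intro t
    rw [htorsf]
    have hk := key_identity (α t - p) (T t) (A t) (C t) (hunit t) (haT t) (hTA t) (haA t)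
      (haC t)
    have h1 : (0:ℝ) < 1 + g t ^ 2 := by positivity
    rw [div_eq_iff (hpos t).ne']
    rw [hgdef]
    field_simp
    linear_combination -hk
  have HF : ∀ t, HasDerivAt (fun u => Real.arctan (g u)) (torsion α t) t := by
    intro t
    have h := (Real.hasDerivAt_arctan (g t)).comp t (Hg t)
    rw [htors t]
    exact h
  -- integrability
  have hTc : Continuous T := hT2.continuous
  have hAc : Continuous A := hA1.continuous
  have hTi : ∀ i, Continuous fun t => T t i := fun i => (continuous_apply i).comp hTc
  have hAi : ∀ i, Continuous fun t => A t i := fun i => (continuous_apply i).comp hAc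
  have hCi : ∀ i, Continuous fun t => C t i := fun i => (continuous_apply i).comp hCc
  have cnum : Continuous fun t => edot (cross (T t) (A t)) (C t) := by
    have hh : (fun t => edot (cross (T t) (A t)) (C t)) = fun t =>
        (T t 1 * A t 2 - T t 2 * A t 1) * C t 0 + (T t 2 * A t 0 - T t 0 * A t 2) * C t 1 +
          (T t 0 * A t 1 - T t 1 * A t 0) * C t 2 := by
      funext t
      simp only [edot, Fin.sum_univ_three, cross_apply0, cross_apply1, cross_apply2]
    rw [hh]
    exact (((((hTi 1).mul (hAi 2)).sub ((hTi 2).mul (hAi 1))).mul (hCi 0)).add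
      ((((hTi 2).mul (hAi 0)).sub ((hTi 0).mul (hAi 2))).mul (hCi 1))).add
      ((((hTi 0).mul (hAi 1)).sub ((hTi 1).mul (hAi 0))).mul (hCi 2))
  have cden : Continuous fun t => edot (A t) (A t) := by
    have hh : (fun t => edot (A t) (A t)) = fun t =>
        A t 0 * A t 0 + A t 1 * A t 1 + A t 2 * A t 2 := by
      funext t; simp only [edot, Fin.sum_univ_three]
    rw [hh]
    exact (((hAi 0).mul (hAi 0)).add ((hAi 1).mul (hAi 1))).add ((hAi 2).mul (hAi 2))
  have hcont : Continuous (torsion α) := by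
    rw [htorsf]
    exact cnum.div cden fun t => (hpos t).ne'
  have hint : IntervalIntegrable (torsion α) MeasureTheory.volume 0 L :=
    hcont.intervalIntegrable 0 L
  -- conclude
  have hFTC := intervalIntegral.integral_eq_sub_of_hasDerivAt (fun t _ => HF t) hint
  rw [hFTC]
  have hgL : g L = g 0 := by
    rw [hgdef]
    simp only
    rw [← hc0, ← hc1, ← hc2]
  rw [hgL, sub_self]
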